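/- Let {(X_k, 𝒳_k)}_{k ≥ 0} be measurable spaces, P⁰, P̃⁰ probability measures on X₀, and for k ≥ 1 let Pᵏ, P̃ᵏ : Ω_{k-1} → 𝒫(X_k) be stochastic kernels on the product space Ω_{k-1} = X₀ × ⋯ × X_{k-1}. If ‖Pᵏ - P̃ᵏ‖ ≤ c_k for all k, then the finite-dimensional product measures ℙⁿ = P⁰ ⊗ P¹ ⊗ ⋯ ⊗ Pⁿ and ℙ̃ⁿ = P̃⁰ ⊗ ⋯ ⊗ P̃ⁿ satisfy ‖ℙⁿ - ℙ̃ⁿ‖ ≤ Σ_{k=0}^n c_k for every n ≥ 0. -/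

import Mathlib

open MeasureTheory ProbabilityTheory
open scoped ENNReal

/-- Total mass (as a real number) of a measure. -/
noncomputable def mass {X : Type*} [MeasurableSpace X] (μ : Measure X) : ℝ :=
  (μ Set.univ).toReal

/-- Total variation distance `‖ν - ν'‖` between two finite measures. -/
noncomputable def tvDist {X : Type*} [MeasurableSpace X] (ν ν' : Measure X)
    [IsFiniteMeasure ν] [IsFiniteMeasure ν'] : ℝ :=
  (((ν.toSignedMeasure - ν'.toSignedMeasure).totalVariation) Set.univ).toReal

/-- The minimum `ν ∧ ν' := ν - (ν - ν')⁻` of two finite measures, via the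
Hahn–Jordan decomposition of `ν - ν'`. -/
noncomputable def measInf {X : Type*} [MeasurableSpace X] (ν ν' : Measure X)
    [IsFiniteMeasure ν] [IsFiniteMeasure ν'] : Measure X :=
  ν - (ν.toSignedMeasure - ν'.toSignedMeasure).toJordanDecomposition.negPart

section Aux

variable {Ω : Type*} [MeasurableSpace Ω]

/-- positive part of the Jordan decomposition of `μ - μ'`. -/
noncomputable def tvPos (μ μ' : Measure Ω) [IsFiniteMeasure μ] [IsFiniteMeasure μ'] :
    Measure Ω :=
  (μ.toSignedMeasure - μ'.toSignedMeasure).toJordanDecomposition.posPart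

/-- negative part of the Jordan decomposition of `μ - μ'`. -/
noncomputable def tvNeg (μ μ' : Measure Ω) [IsFiniteMeasure μ] [IsFiniteMeasure μ'] :
    Measure Ω :=
  (μ.toSignedMeasure - μ'.toSignedMeasure).toJordanDecomposition.negPart

instance (μ μ' : Measure Ω) [IsFiniteMeasure μ] [IsFiniteMeasure μ'] :
    IsFiniteMeasure (tvPos μ μ') := by
  unfold tvPos; infer_instance

instance (μ μ' : Measure Ω) [IsFiniteMeasure μ] [IsFiniteMeasure μ'] :
    IsFiniteMeasure (tvNeg μ μ') := by
  unfold tvNeg; infer_instance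

variable (μ μ' : Measure Ω) [IsFiniteMeasure μ] [IsFiniteMeasure μ']

/-- Key identity: `μ + (μ - μ')⁻ = μ' + (μ - μ')⁺`. -/
theorem tv_key : μ + tvNeg μ μ' = μ' + tvPos μ μ' := by
  ext A hA
  have hs := (μ.toSignedMeasure - μ'.toSignedMeasure).toSignedMeasure_toJordanDecomposition
  have h2 := congrArg (fun s : SignedMeasure Ω => s A) hs
  simp only [MeasureTheory.JordanDecomposition.toSignedMeasure] at h2
  rw [Measure.toSignedMeasure_sub_apply hA, Measure.toSignedMeasure_sub_apply hA] at h2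
  rw [Measure.add_apply, Measure.add_apply]
  rw [← ENNReal.toReal_eq_toReal_iff' (by finiteness) (by finiteness)]
  rw [ENNReal.toReal_add (by finiteness) (by finiteness),
    ENNReal.toReal_add (by finiteness) (by finiteness)]
  show (μ A).toReal + ((tvNeg μ μ') A).toReal = (μ' A).toReal + ((tvPos μ μ') A).toReal
  unfold tvPos tvNeg
  simp only [measureReal_def] at h2
  linarith [h2]

theorem tv_set_le {A : Set Ω} (hA : MeasurableSet A) :
    μ A ≤ μ' A + tvPos μ μ' Set.univ := by
  calc μ A ≤ μ A + tvNeg μ μ' A := le_self_add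
    _ = (μ + tvNeg μ μ') A := (Measure.add_apply _ _ _).symm
    _ = (μ' + tvPos μ μ') A := by rw [tv_key μ μ']
    _ = μ' A + tvPos μ μ' A := Measure.add_apply _ _ _
    _ ≤ μ' A + tvPos μ μ' Set.univ :=
        add_le_add_right (measure_mono (Set.subset_univ A)) _

theorem tv_lintegral_le (g : Ω → ℝ≥0∞) (hg1 : ∀ ω, g ω ≤ 1) :
    ∫⁻ ω, g ω ∂μ ≤ (∫⁻ ω, g ω ∂μ') + tvPos μ μ' Set.univ := by
  calc ∫⁻ ω, g ω ∂μ ≤ ∫⁻ ω, g ω ∂μ + ∫⁻ ω, g ω ∂(tvNeg μ μ') := le_self_add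
    _ = ∫⁻ ω, g ω ∂(μ + tvNeg μ μ') := (lintegral_add_measure _ _ _).symm
    _ = ∫⁻ ω, g ω ∂(μ' + tvPos μ μ') := by rw [tv_key μ μ']
    _ = (∫⁻ ω, g ω ∂μ') + ∫⁻ ω, g ω ∂(tvPos μ μ') := lintegral_add_measure _ _ _
    _ ≤ (∫⁻ ω, g ω ∂μ') + tvPos μ μ' Set.univ := by
        gcongr
        calc ∫⁻ ω, g ω ∂(tvPos μ μ') ≤ ∫⁻ _, 1 ∂(tvPos μ μ') := lintegral_mono hg1
          _ = tvPos μ μ' Set.univ := by simp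

theorem tvDist_eq_parts : tvDist μ μ' =
    (tvPos μ μ' Set.univ).toReal + (tvNeg μ μ' Set.univ).toReal := by
  rw [tvDist, MeasureTheory.SignedMeasure.totalVariation, Measure.add_apply,
    ENNReal.toReal_add (measure_ne_top _ _) (measure_ne_top _ _)]
  unfold tvPos tvNeg
  rfl

theorem tvDist_nonneg : 0 ≤ tvDist μ μ' := ENNReal.toReal_nonneg

/-- Hahn-set representation of the total variation distance. -/
theorem tvDist_exists_set : ∃ i : Set Ω, MeasurableSet i ∧
    (tvPos μ μ' Set.univ).toReal = (μ i).toReal - (μ' i).toReal ∧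
    (tvNeg μ μ' Set.univ).toReal = (μ' iᶜ).toReal - (μ iᶜ).toReal := by
  obtain ⟨i, hi₁, hi₂, hi₃, hp, hn⟩ :=
    (μ.toSignedMeasure - μ'.toSignedMeasure).toJordanDecomposition_spec
  refine ⟨i, hi₁, ?_, ?_⟩
  · have h : tvPos μ μ' Set.univ =
        (μ.toSignedMeasure - μ'.toSignedMeasure).toMeasureOfZeroLE i hi₁ hi₂ Set.univ := by
      unfold tvPos; rw [hp]
    rw [h, MeasureTheory.SignedMeasure.toMeasureOfZeroLE_apply _ hi₂ hi₁ MeasurableSet.univ]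
    have h2 : (μ.toSignedMeasure - μ'.toSignedMeasure) (i ∩ Set.univ) =
        (μ i).toReal - (μ' i).toReal := by
      rw [Set.inter_univ, Measure.toSignedMeasure_sub_apply hi₁]; rfl
    simp [h2, hi₁]; rfl
  · have h : tvNeg μ μ' Set.univ =
        (μ.toSignedMeasure - μ'.toSignedMeasure).toMeasureOfLEZero iᶜ hi₁.compl hi₃
          Set.univ := by
      unfold tvNeg; rw [hn]
    rw [h, MeasureTheory.SignedMeasure.toMeasureOfLEZero_apply _ hi₃ hi₁.compl
      MeasurableSet.univ]
    have h2 : (μ.toSignedMeasure - μ'.toSignedMeasure) (iᶜ ∩ Set.univ) =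
        (μ iᶜ).toReal - (μ' iᶜ).toReal := by
      rw [Set.inter_univ, Measure.toSignedMeasure_sub_apply hi₁.compl]; rfl
    simp [hi₁.compl]; rfl

/-- For probability measures the two parts have equal mass. -/
theorem tv_parts_eq [IsProbabilityMeasure μ] [IsProbabilityMeasure μ'] :
    tvPos μ μ' Set.univ = tvNeg μ μ' Set.univ := by
  have h := congrArg (fun ν : Measure Ω => ν Set.univ) (tv_key μ μ')
  simp only [Measure.add_apply, measure_univ] at h
  exact (ENNReal.add_right_inj ENNReal.one_ne_top).mp h.symm

theorem tvPos_le_half [IsProbabilityMeasure μ] [IsProbabilityMeasure μ'] {a : ℝ}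
    (h : tvDist μ μ' ≤ a) : tvPos μ μ' Set.univ ≤ ENNReal.ofReal (a / 2) := by
  have he := tvDist_eq_parts μ μ'
  rw [tv_parts_eq μ μ'] at he
  have : (tvNeg μ μ' Set.univ).toReal ≤ a / 2 := by linarith
  calc tvPos μ μ' Set.univ = ENNReal.ofReal (tvNeg μ μ' Set.univ).toReal := by
        rw [tv_parts_eq μ μ', ENNReal.ofReal_toReal (measure_ne_top _ _)]
    _ ≤ ENNReal.ofReal (a / 2) := ENNReal.ofReal_le_ofReal this

theorem tvDist_map_le {Γ : Type*} [MeasurableSpace Γ] {f : Ω → Γ} (hf : Measurable f) :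
    tvDist (μ.map f) (μ'.map f) ≤ tvDist μ μ' := by
  obtain ⟨i, hi, h1, h2⟩ := tvDist_exists_set (μ.map f) (μ'.map f)
  rw [tvDist_eq_parts, h1, h2, Measure.map_apply hf hi, Measure.map_apply hf hi,
    Measure.map_apply hf hi.compl, Measure.map_apply hf hi.compl]
  have hA : MeasurableSet (f ⁻¹' i) := hf hi
  have e1 : (μ (f ⁻¹' i)).toReal - (μ' (f ⁻¹' i)).toReal ≤ (tvPos μ μ' Set.univ).toReal := by
    have := tv_set_le μ μ' hA
    have := ENNReal.toReal_le_toReal (measure_ne_top _ _)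
      (by finiteness : μ' (f ⁻¹' i) + tvPos μ μ' Set.univ ≠ ∞) |>.mpr this
    rw [ENNReal.toReal_add (measure_ne_top _ _) (measure_ne_top _ _)] at this
    linarith
  have e2 : (μ' (f ⁻¹' iᶜ)).toReal - (μ (f ⁻¹' iᶜ)).toReal ≤ (tvNeg μ μ' Set.univ).toReal := by
    have hle : μ' (f ⁻¹' iᶜ) ≤ μ (f ⁻¹' iᶜ) + tvNeg μ μ' Set.univ := by
      calc μ' (f ⁻¹' iᶜ) ≤ μ' (f ⁻¹' iᶜ) + tvPos μ μ' (f ⁻¹' iᶜ) := le_self_add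
        _ = (μ' + tvPos μ μ') (f ⁻¹' iᶜ) := (Measure.add_apply _ _ _).symm
        _ = (μ + tvNeg μ μ') (f ⁻¹' iᶜ) := by rw [tv_key μ μ']
        _ = μ (f ⁻¹' iᶜ) + tvNeg μ μ' (f ⁻¹' iᶜ) := Measure.add_apply _ _ _
        _ ≤ μ (f ⁻¹' iᶜ) + tvNeg μ μ' Set.univ :=
            add_le_add_right (measure_mono (Set.subset_univ _)) _
    have := ENNReal.toReal_le_toReal (measure_ne_top _ _)
      (by finiteness : μ (f ⁻¹' iᶜ) + tvNeg μ μ' Set.univ ≠ ∞) |>.mpr hle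
    rw [ENNReal.toReal_add (measure_ne_top _ _) (measure_ne_top _ _)] at this
    linarith
  rw [tvDist_eq_parts μ μ']
  linarith

/-- Main step: total-variation bound for composition-products. -/
theorem tvDist_compProd_map_le {Y Γ : Type*} [MeasurableSpace Y] [MeasurableSpace Γ]
    [IsProbabilityMeasure μ] [IsProbabilityMeasure μ']
    (κ κ' : Kernel Ω Y) [IsMarkovKernel κ] [IsMarkovKernel κ']
    {f : Ω × Y → Γ} (hf : Measurable f) {a b : ℝ}
    (ha : tvDist μ μ' ≤ a) (hb : ∀ ω, tvDist (κ ω) (κ' ω) ≤ b) :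
    tvDist (((μ ⊗ₘ κ).map f)) (((μ' ⊗ₘ κ').map f)) ≤ a + b := by
  have hΩ : Nonempty Ω := by
    by_contra h
    rw [not_nonempty_iff] at h
    have : μ Set.univ = 0 := by simp [Set.univ_eq_empty_iff.mpr h]
    simp [measure_univ] at this
  have hb0 : 0 ≤ b := le_trans (tvDist_nonneg _ _) (hb (Classical.arbitrary Ω))
  have ha0 : 0 ≤ a := le_trans (tvDist_nonneg _ _) ha
  haveI : IsProbabilityMeasure ((μ ⊗ₘ κ).map f) :=
    Measure.isProbabilityMeasure_map hf.aemeasurable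
  haveI : IsProbabilityMeasure ((μ' ⊗ₘ κ').map f) :=
    Measure.isProbabilityMeasure_map hf.aemeasurable
  obtain ⟨i, hi, h1, h2⟩ := tvDist_exists_set ((μ ⊗ₘ κ).map f) ((μ' ⊗ₘ κ').map f)
  set S : Set (Ω × Y) := f ⁻¹' i with hS
  have hSm : MeasurableSet S := hf hi
  -- key ENNReal bound
  have key : (μ ⊗ₘ κ) S ≤ (μ' ⊗ₘ κ') S + ENNReal.ofReal (a / 2) + ENNReal.ofReal (b / 2) := by
    rw [Measure.compProd_apply hSm, Measure.compProd_apply hSm]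
    set g' : Ω → ℝ≥0∞ := fun ω => κ' ω (Prod.mk ω ⁻¹' S) with hg'
    have hg'm : Measurable g' := Kernel.measurable_kernel_prodMk_left hSm
    have step1 : ∫⁻ ω, κ ω (Prod.mk ω ⁻¹' S) ∂μ ≤
        (∫⁻ ω, g' ω ∂μ) + ENNReal.ofReal (b / 2) := by
      calc ∫⁻ ω, κ ω (Prod.mk ω ⁻¹' S) ∂μ
          ≤ ∫⁻ ω, g' ω + ENNReal.ofReal (b / 2) ∂μ := by
            refine lintegral_mono fun ω => ?_
            calc κ ω (Prod.mk ω ⁻¹' S)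
                ≤ κ' ω (Prod.mk ω ⁻¹' S) + tvPos (κ ω) (κ' ω) Set.univ :=
                  tv_set_le (κ ω) (κ' ω) (measurable_prodMk_left hSm)
              _ ≤ g' ω + ENNReal.ofReal (b / 2) := by
                  gcongr; exact tvPos_le_half _ _ (hb ω)
        _ = (∫⁻ ω, g' ω ∂μ) + ENNReal.ofReal (b / 2) := by
            rw [lintegral_add_right _ measurable_const, lintegral_const, measure_univ, mul_one]
    have step2 : ∫⁻ ω, g' ω ∂μ ≤ (∫⁻ ω, g' ω ∂μ') + ENNReal.ofReal (a / 2) := by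
      refine le_trans (tv_lintegral_le μ μ' g' fun ω => prob_le_one) ?_
      gcongr
      exact tvPos_le_half _ _ ha
    calc ∫⁻ ω, κ ω (Prod.mk ω ⁻¹' S) ∂μ ≤ (∫⁻ ω, g' ω ∂μ) + ENNReal.ofReal (b / 2) := step1
      _ ≤ (∫⁻ ω, g' ω ∂μ') + ENNReal.ofReal (a / 2) + ENNReal.ofReal (b / 2) := by gcongr
  have keyR : (((μ ⊗ₘ κ).map f) i).toReal - (((μ' ⊗ₘ κ').map f) i).toReal ≤ a / 2 + b / 2 := by
    rw [Measure.map_apply hf hi, Measure.map_apply hf hi]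
    have := ENNReal.toReal_le_toReal (measure_ne_top _ _)
      (by finiteness : (μ' ⊗ₘ κ') S + ENNReal.ofReal (a / 2) + ENNReal.ofReal (b / 2) ≠ ∞)
      |>.mpr key
    rw [ENNReal.toReal_add (by finiteness) (by finiteness),
      ENNReal.toReal_add (by finiteness) (by finiteness),
      ENNReal.toReal_ofReal (by linarith), ENNReal.toReal_ofReal (by linarith)] at this
    linarith
  -- compl values of probability measures
  have hcompl : ∀ (ν : Measure Γ) [IsProbabilityMeasure ν],
      (ν iᶜ).toReal = 1 - (ν i).toReal := by
    intro ν _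
    rw [measure_compl hi (measure_ne_top _ _), measure_univ,
      ENNReal.toReal_sub_of_le prob_le_one ENNReal.one_ne_top]
    simp
  rw [tvDist_eq_parts, h1, h2, hcompl _, hcompl _]
  linarith

end Aux

theorem measurable_finCons {X : ℕ → Type*} [∀ k, MeasurableSpace (X k)] :
    Measurable (fun x => Fin.cons (α := fun i : Fin 1 => X i.val) x finZeroElim) := by
  refine measurable_pi_lambda _ fun i => ?_
  refine Fin.cases ?_ (fun j => j.elim0) i
  simpa using measurable_id'

theorem measurable_finSnoc {n : ℕ} {X : ℕ → Type*} [∀ k, MeasurableSpace (X k)] :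
    Measurable (fun q : (∀ i : Fin (n + 1), X i.val) × X (n + 1) =>
      Fin.snoc (α := fun i : Fin (n + 2) => X i.val) q.1 q.2) := by
  refine measurable_pi_lambda _ fun i => ?_
  refine Fin.lastCases ?_ (fun j => ?_) i
  · simpa using measurable_snd
  · simp only [Fin.snoc_castSucc]
    exact (measurable_pi_apply j).comp measurable_fst

theorem stmt2 {X : ℕ → Type*} [∀ k, MeasurableSpace (X k)]
    (P0 P0' : Measure (X 0)) [IsProbabilityMeasure P0] [IsProbabilityMeasure P0']
    (P P' : ∀ k, Kernel (∀ i : Fin (k + 1), X i.val) (X (k + 1)))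
    [∀ k, IsMarkovKernel (P k)] [∀ k, IsMarkovKernel (P' k)]
    (Pr Pr' : ∀ n, Measure (∀ i : Fin (n + 1), X i.val))
    [∀ n, IsProbabilityMeasure (Pr n)] [∀ n, IsProbabilityMeasure (Pr' n)]
    (hPr0 : Pr 0 = P0.map (fun x => Fin.cons (α := fun i : Fin 1 => X i.val) x finZeroElim))
    (hPr0' : Pr' 0 = P0'.map (fun x => Fin.cons (α := fun i : Fin 1 => X i.val) x finZeroElim))
    (hPr : ∀ n, Pr (n + 1) =
      ((Pr n) ⊗ₘ (P n)).map (fun q => Fin.snoc (α := fun i : Fin (n + 2) => X i.val) q.1 q.2))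
    (hPr' : ∀ n, Pr' (n + 1) =
      ((Pr' n) ⊗ₘ (P' n)).map (fun q => Fin.snoc (α := fun i : Fin (n + 2) => X i.val) q.1 q.2))
    (c : ℕ → ℝ)
    (hc0 : tvDist P0 P0' ≤ c 0)
    (hc : ∀ k, ∀ ω, tvDist (P k ω) (P' k ω) ≤ c (k + 1)) :
    ∀ n, tvDist (Pr n) (Pr' n) ≤ ∑ k ∈ Finset.range (n + 1), c k := by
  intro n
  induction n with
  | zero =>
    rw [Finset.sum_range_one]
    calc tvDist (Pr 0) (Pr' 0) = tvDist
          (P0.map (fun x => Fin.cons (α := fun i : Fin 1 => X i.val) x finZeroElim))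
          (P0'.map (fun x => Fin.cons (α := fun i : Fin 1 => X i.val) x finZeroElim)) := by
          congr 1
      _ ≤ tvDist P0 P0' := tvDist_map_le _ _ measurable_finCons
      _ ≤ c 0 := hc0
  | succ n ih =>
    rw [Finset.sum_range_succ]
    calc tvDist (Pr (n + 1)) (Pr' (n + 1)) = tvDist
          (((Pr n) ⊗ₘ (P n)).map
            (fun q => Fin.snoc (α := fun i : Fin (n + 2) => X i.val) q.1 q.2))
          (((Pr' n) ⊗ₘ (P' n)).map
            (fun q => Fin.snoc (α := fun i : Fin (n + 2) => X i.val) q.1 q.2)) := by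
          congr 1
          · exact hPr n
          · exact hPr' n
      _ ≤ (∑ k ∈ Finset.range (n + 1), c k) + c (n + 1) :=
          tvDist_compProd_map_le _ _ _ _ measurable_finSnoc ih (hc n)
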